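/- Let x : [0,∞) → ℝ be right-continuous with left limits (RCLL) and x(0) = 0. Suppose (y, z) and (ȳ, z̄) are two pairs of RCLL functions [0,∞) → ℝ such that: (a) z(t) = x(t) + y(t) ≥ 0 and z̄(t) = x(t) + ȳ(t) ≥ 0 for all t ≥ 0; (b) y and ȳ are nondecreasing with y(0) = ȳ(0) = 0; (c) ∫_{[0,∞)} z dμ_y = 0 and ∫_{[0,∞)} z̄ dμ_ȳ = 0, where μ_y, μ_ȳ are the Lebesgue–Stieltjes measures of y, ȳ. Then y = ȳ and z = z̄; moreover y(t) = sup_{0 ≤ s ≤ t} (−x(s)) for every t ≥ 0. -/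

import Mathlib

open Set Filter MeasureTheory

/-- Any solution of the Skorokhod problem satisfies `y t = sup_{0 ≤ s ≤ t} (-x s)`. -/
theorem skorokhod_key (x y z : ℝ → ℝ) (μy : Measure ℝ)
    (hx0 : x 0 = 0)
    (ha : ∀ t : ℝ, 0 ≤ t → z t = x t + y t ∧ 0 ≤ z t)
    (hymono : MonotoneOn y (Ici 0)) (hy0 : y 0 = 0)
    (hμy : ∀ a b : ℝ, 0 ≤ a → a ≤ b → μy (Ioc a b) = ENNReal.ofReal (y b - y a))
    (hc : ∫⁻ t in Ici (0 : ℝ), ENNReal.ofReal (z t) ∂μy = 0) :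
    ∀ t : ℝ, 0 ≤ t → y t = sSup ((fun s => - x s) '' Icc 0 t) := by
  intro t ht
  set S := (fun s => - x s) '' Icc 0 t with hS
  have hne : S.Nonempty := ⟨-x 0, ⟨0, ⟨le_refl 0, ht⟩, rfl⟩⟩
  have hub : ∀ a ∈ S, a ≤ y t := by
    rintro a ⟨s, hs, rfl⟩
    have hz := ha s hs.1
    have h1 : -x s ≤ y s := by linarith [hz.1, hz.2]
    exact h1.trans (hymono hs.1 ht hs.2)
  have hbdd : BddAbove S := ⟨y t, hub⟩
  set c := sSup S with hc_def
  have hcle : c ≤ y t := csSup_le hne hub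
  have hxc : ∀ s : ℝ, 0 ≤ s → s ≤ t → -x s ≤ c := fun s h1 h2 =>
    le_csSup hbdd ⟨s, ⟨h1, h2⟩, rfl⟩
  have hc0 : 0 ≤ c := by simpa [hx0] using hxc 0 le_rfl ht
  have hyc : y t ≤ c := by
    by_contra hlt
    push_neg at hlt
    set c' := (c + y t) / 2 with hc'
    have hc1 : c < c' := by simp only [hc']; linarith
    have hc2 : c' < y t := by simp only [hc']; linarith
    have hc'0 : 0 < c' := lt_of_le_of_lt hc0 hc1
    set T := {s : ℝ | s ∈ Icc 0 t ∧ c' < y s} with hT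
    have htT : t ∈ T := ⟨⟨ht, le_rfl⟩, hc2⟩
    have hbl : ∀ u ∈ T, (0:ℝ) ≤ u := fun u hu => hu.1.1
    set s₁ := sInf T with hs₁
    have hs₁0 : 0 ≤ s₁ := le_csInf ⟨t, htT⟩ hbl
    have hs₁t : s₁ ≤ t := csInf_le ⟨0, hbl⟩ htT
    have hlow : ∀ s : ℝ, 0 ≤ s → s < s₁ → y s ≤ c' := by
      intro s h0 hss
      by_contra h
      push_neg at h
      have hmem : s ∈ T := ⟨⟨h0, le_trans hss.le hs₁t⟩, h⟩
      exact absurd (csInf_le ⟨0, hbl⟩ hmem) (not_le.2 hss)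
    have hhigh : ∀ s : ℝ, s₁ < s → s ≤ t → c' < y s := by
      intro s hs hst
      obtain ⟨u, huT, hus⟩ := exists_lt_of_csInf_lt ⟨t, htT⟩ hs
      exact lt_of_lt_of_le huT.2 (hymono huT.1.1 (le_trans hs₁0 hs.le) hus.le)
    -- if `z ≥ c' - c > 0` on a set `A ⊆ [0,∞)`, then `μy A = 0`
    have key : ∀ A : Set ℝ, MeasurableSet A → A ⊆ Ici (0:ℝ) →
        (∀ s ∈ A, c' - c ≤ z s) → μy A = 0 := by
      intro A hA hA0 hzA
      have h1 : ∫⁻ s in A, ENNReal.ofReal (z s) ∂μy = 0 :=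
        le_antisymm (hc ▸ lintegral_mono_set hA0) zero_le
      have h2 : ENNReal.ofReal (c' - c) * μy A ≤ ∫⁻ s in A, ENNReal.ofReal (z s) ∂μy := by
        rw [← setLIntegral_const A (ENNReal.ofReal (c' - c))]
        refine lintegral_mono_ae ?_
        exact (ae_restrict_iff' hA).2 (ae_of_all _ fun s hs =>
          ENNReal.ofReal_le_ofReal (hzA s hs))
      rw [h1] at h2
      have h3 : ENNReal.ofReal (c' - c) ≠ 0 := by
        simp [ENNReal.ofReal_eq_zero]; linarith
      simpa [h3] using (le_zero_iff.1 h2)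
    by_cases hcase : y s₁ ≤ c'
    · -- no jump: contradiction on `Ioc s₁ t`
      have hs₁lt : s₁ < t := lt_of_le_of_ne hs₁t (fun h => by rw [h] at hcase; linarith)
      have hz : ∀ s ∈ Ioc s₁ t, c' - c ≤ z s := by
        intro s hs
        have h0s : (0:ℝ) ≤ s := le_trans hs₁0 hs.1.le
        have := (ha s h0s).1
        have hxs := hxc s h0s hs.2
        have hys := hhigh s hs.1 hs.2
        linarith
      have h0 := key (Ioc s₁ t) measurableSet_Ioc (fun s hs => le_trans hs₁0 hs.1.le) hz
      rw [hμy s₁ t hs₁0 hs₁t] at h0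
      rw [ENNReal.ofReal_eq_zero] at h0
      linarith
    · -- jump at `s₁`: the singleton `{s₁}` has positive measure
      push_neg at hcase
      have hs₁pos : 0 < s₁ := by
        rcases lt_or_eq_of_le hs₁0 with h | h
        · exact h
        · exfalso; rw [← h, hy0] at hcase; linarith
      set u : ℕ → ℝ := fun n => s₁ - s₁ / (n + 1) with hu
      have hu_lt : ∀ n, u n < s₁ := by
        intro n
        have : 0 < s₁ / (n + 1) := div_pos hs₁pos (by positivity)
        simp only [hu]; linarith
      have hu_nonneg : ∀ n, 0 ≤ u n := by
        intro n
        have h1 : s₁ / (n + 1) ≤ s₁ / 1 := by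
          apply div_le_div_of_nonneg_left hs₁pos.le one_pos
          · exact_mod_cast Nat.succ_le_succ (Nat.zero_le n)
        simp only [hu]; rw [div_one] at h1; linarith
      have hu_mono : Monotone u := by
        intro n m hnm
        simp only [hu]
        have : s₁ / (m + 1) ≤ s₁ / (n + 1) := by
          apply div_le_div_of_nonneg_left hs₁pos.le (by positivity)
          exact_mod_cast Nat.succ_le_succ hnm
        linarith
      have hu_tendsto : Tendsto u atTop (nhds s₁) := by
        have h1 : Tendsto (fun n : ℕ => s₁ / (n + 1)) atTop (nhds 0) :=
          Tendsto.div_atTop tendsto_const_nhds (tendsto_atTop_add_const_right _ 1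
            tendsto_natCast_atTop_atTop)
        simpa using tendsto_const_nhds.sub h1
      have hinter : ⋂ n, Ioc (u n) s₁ = {s₁} := by
        ext v
        simp only [mem_iInter, mem_Ioc, mem_singleton_iff]
        constructor
        · intro h
          have h1 : s₁ ≤ v := le_of_tendsto hu_tendsto
            (Eventually.of_forall fun n => (h n).1.le)
          exact le_antisymm (h 0).2 h1
        · rintro rfl
          exact fun n => ⟨hu_lt n, le_rfl⟩
      have htend : Tendsto (fun n => μy (Ioc (u n) s₁)) atTop (nhds (μy {s₁})) := by
        have := tendsto_measure_iInter_atTop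
          (μ := μy) (s := fun n => Ioc (u n) s₁)
          (fun n => measurableSet_Ioc.nullMeasurableSet)
          (fun n m hnm => Ioc_subset_Ioc_left (hu_mono hnm))
          ⟨0, by rw [hμy _ _ (hu_nonneg 0) (hu_lt 0).le]; exact ENNReal.ofReal_ne_top⟩
        rwa [hinter] at this
      have hatom : ENNReal.ofReal (y s₁ - c') ≤ μy {s₁} := by
        refine ge_of_tendsto htend (Eventually.of_forall fun n => ?_)
        rw [hμy _ _ (hu_nonneg n) (hu_lt n).le]
        exact ENNReal.ofReal_le_ofReal (by linarith [hlow (u n) (hu_nonneg n) (hu_lt n)])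
      have hz : ∀ s ∈ ({s₁} : Set ℝ), c' - c ≤ z s := by
        rintro s rfl
        have := (ha s₁ hs₁0).1
        have hxs := hxc s₁ hs₁0 hs₁t
        linarith
      have h0 := key {s₁} (measurableSet_singleton s₁)
        (by rintro s rfl; exact hs₁0) hz
      rw [h0] at hatom
      rw [le_zero_iff, ENNReal.ofReal_eq_zero] at hatom
      linarith
  exact le_antisymm hyc hcle

theorem skorokhod_uniqueness (x : ℝ → ℝ)
    (hxrc : ∀ t : ℝ, 0 ≤ t → ContinuousWithinAt x (Ici t) t)
    (hxll : ∀ t : ℝ, 0 < t → ∃ l : ℝ, Tendsto x (nhdsWithin t (Iio t)) (nhds l))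
    (hx0 : x 0 = 0)
    (y z ybar zbar : ℝ → ℝ) (μy μybar : Measure ℝ)
    -- (y, z) and (ȳ, z̄) are RCLL on [0,∞)
    (hyrc : ∀ t : ℝ, 0 ≤ t → ContinuousWithinAt y (Ici t) t)
    (hyll : ∀ t : ℝ, 0 < t → ∃ l : ℝ, Tendsto y (nhdsWithin t (Iio t)) (nhds l))
    (hzrc : ∀ t : ℝ, 0 ≤ t → ContinuousWithinAt z (Ici t) t)
    (hzll : ∀ t : ℝ, 0 < t → ∃ l : ℝ, Tendsto z (nhdsWithin t (Iio t)) (nhds l))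
    (hybarrc : ∀ t : ℝ, 0 ≤ t → ContinuousWithinAt ybar (Ici t) t)
    (hybarll : ∀ t : ℝ, 0 < t → ∃ l : ℝ, Tendsto ybar (nhdsWithin t (Iio t)) (nhds l))
    (hzbarrc : ∀ t : ℝ, 0 ≤ t → ContinuousWithinAt zbar (Ici t) t)
    (hzbarll : ∀ t : ℝ, 0 < t → ∃ l : ℝ, Tendsto zbar (nhdsWithin t (Iio t)) (nhds l))
    -- (a): z = x + y ≥ 0 and z̄ = x + ȳ ≥ 0 on [0,∞)
    (ha : ∀ t : ℝ, 0 ≤ t → z t = x t + y t ∧ 0 ≤ z t)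
    (habar : ∀ t : ℝ, 0 ≤ t → zbar t = x t + ybar t ∧ 0 ≤ zbar t)
    -- (b): y, ȳ nondecreasing on [0,∞) with y(0) = ȳ(0) = 0
    (hymono : MonotoneOn y (Ici 0)) (hy0 : y 0 = 0)
    (hybarmono : MonotoneOn ybar (Ici 0)) (hybar0 : ybar 0 = 0)
    -- μ_y, μ_ȳ are the Lebesgue–Stieltjes measures of y, ȳ on [0,∞)
    (hμy : ∀ a b : ℝ, 0 ≤ a → a ≤ b → μy (Ioc a b) = ENNReal.ofReal (y b - y a))
    (hμy0 : μy (Iic 0) = 0)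
    (hμybar : ∀ a b : ℝ, 0 ≤ a → a ≤ b → μybar (Ioc a b) = ENNReal.ofReal (ybar b - ybar a))
    (hμybar0 : μybar (Iic 0) = 0)
    -- (c): ∫_{[0,∞)} z dμ_y = 0 and ∫_{[0,∞)} z̄ dμ_ȳ = 0
    (hc : ∫⁻ t in Ici (0 : ℝ), ENNReal.ofReal (z t) ∂μy = 0)
    (hcbar : ∫⁻ t in Ici (0 : ℝ), ENNReal.ofReal (zbar t) ∂μybar = 0) :
    ∀ t : ℝ, 0 ≤ t →
      y t = ybar t ∧ z t = zbar t ∧ y t = sSup ((fun s => - x s) '' Icc 0 t) := by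
  intro t ht
  have h1 := skorokhod_key x y z μy hx0 ha hymono hy0 hμy hc t ht
  have h2 := skorokhod_key x ybar zbar μybar hx0 habar hybarmono hybar0 hμybar hcbar t ht
  have hyy : y t = ybar t := h1.trans h2.symm
  refine ⟨hyy, ?_, h1⟩
  rw [(ha t ht).1, (habar t ht).1, hyy]
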